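/- Total Error Bound in the ε-Regime (Theorem 4.2): let A be a finite type with exactly two elements, B and C finite types, and p, q probability mass functions on A × B × C such that D_KL(p‖q) ≤ ε and the total variation distance satisfies δ(p,q) ≤ 1/2. Set I = H_p(A | C) − H_p(A | B × C) (the true conditional mutual information) and I_θ = H_q(A | C) − H_q(A | B × C) (the model-induced CMI). Let (Î_N)_{N≥1} be a sequence of real-valued random variables on a probability space converging almost surely to I_θ. Then, almost surely, limsup_{N→∞} |I − Î_N| ≤ 2·√(ε/2)·log 2 + 2·(1+√(ε/2))·h_b( √(ε/2) / (1+√(ε/2)) ). -/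

import Mathlib

open Finset

/-- Shannon entropy (in nats) of a probability mass function on a finite type,
with the convention `0 · log 0 = 0` (which holds since `Real.log 0 = 0`). -/
noncomputable def entropy {S : Type*} [Fintype S] (p : S → ℝ) : ℝ :=
  ∑ x, -(p x * Real.log (p x))

/-- Conditional Shannon entropy `H_p(A | B)` of a pmf `p` on a product
`A × B`: `∑_b p_B(b) · H(p_{A|B=b})`, where terms with `p_B(b) = 0`
contribute `0` (the factor `p_B(b)` vanishes). -/
noncomputable def condEntropy {A B : Type*} [Fintype A] [Fintype B]
    (p : A × B → ℝ) : ℝ :=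
  ∑ b, (∑ a, p (a, b)) * entropy (fun a => p (a, b) / ∑ a', p (a', b))

/-- Conditional mutual information `I_p(A; B | C)` of a pmf `p` on
`A × B × C`, defined as `H_p(A | C) − H_p(A | B × C)`. -/
noncomputable def cmi {A B C : Type*} [Fintype A] [Fintype B] [Fintype C]
    (p : A × B × C → ℝ) : ℝ :=
  condEntropy (fun ac : A × C => ∑ b, p (ac.1, b, ac.2)) -
    condEntropy (fun abc : A × (B × C) => p (abc.1, abc.2.1, abc.2.2))

/-- Kullback–Leibler divergence (in nats) between two pmfs on a finite type,
with the convention that terms with `p x = 0` contribute `0`. -/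
noncomputable def klDiv {S : Type*} [Fintype S] (p q : S → ℝ) : ℝ :=
  ∑ x, p x * Real.log (p x / q x)

/-- Total variation distance between two pmfs on a finite type. -/
noncomputable def tvDist {S : Type*} [Fintype S] (p q : S → ℝ) : ℝ :=
  (1 / 2) * ∑ x, |p x - q x|

/-- Binary entropy function (in nats), `h_b(x) = −x log x − (1−x) log(1−x)`,
with `h_b(0) = h_b(1) = 0` (automatic since `Real.log 0 = 0`). -/
noncomputable def binEntropy (x : ℝ) : ℝ :=
  -(x * Real.log x) - (1 - x) * Real.log (1 - x)

/-- The KL integrand `x log (x/y)`. -/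
noncomputable def klTerm (x y : ℝ) : ℝ := x * Real.log (x / y)

@[simp] lemma klTerm_zero (y : ℝ) : klTerm 0 y = 0 := by simp [klTerm]

lemma klTerm_smul {c : ℝ} (hc : 0 ≤ c) (x y : ℝ) :
    klTerm (c * x) (c * y) = c * klTerm x y := by
  rcases eq_or_lt_of_le hc with h | h
  · simp [klTerm, ← h]
  · unfold klTerm
    rw [mul_div_mul_left x y h.ne']
    ring

/-- Two-point log-sum inequality. -/
lemma klTerm_add_le {u v s t : ℝ} (hu : 0 ≤ u) (hv : 0 ≤ v) (hs : 0 ≤ s) (ht : 0 ≤ t)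
    (hus : s = 0 → u = 0) (hvt : t = 0 → v = 0) :
    klTerm (u + v) (s + t) ≤ klTerm u s + klTerm v t := by
  rcases eq_or_lt_of_le hs with h0s | hs'
  · rw [hus h0s.symm, ← h0s]
    simp
  rcases eq_or_lt_of_le ht with h0t | ht'
  · rw [hvt h0t.symm, ← h0t]
    simp
  have hst : 0 < s + t := by linarith
  have h := Real.convexOn_mul_log.2 (Set.mem_Ici.2 (div_nonneg hu hs'.le))
      (Set.mem_Ici.2 (div_nonneg hv ht'.le))
      (by positivity : (0:ℝ) ≤ s / (s + t)) (by positivity : (0:ℝ) ≤ t / (s + t))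
      (by field_simp)
  simp only [smul_eq_mul] at h
  have e1 : s / (s + t) * (u / s) + t / (s + t) * (v / t) = (u + v) / (s + t) := by
    field_simp
  rw [e1] at h
  have h' := mul_le_mul_of_nonneg_left h hst.le
  calc klTerm (u + v) (s + t)
      = (s + t) * ((u + v) / (s + t) * Real.log ((u + v) / (s + t))) := by
        unfold klTerm
        field_simp
    _ ≤ (s + t) * (s / (s + t) * (u / s * Real.log (u / s)) +
          t / (s + t) * (v / t * Real.log (v / t))) := h'
    _ = klTerm u s + klTerm v t := by
        unfold klTerm
        field_simp

/-- Finset log-sum inequality. -/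
lemma klTerm_sum_le {ι : Type*} (s : Finset ι) (w y : ι → ℝ)
    (hw : ∀ i ∈ s, 0 ≤ w i) (hy : ∀ i ∈ s, 0 ≤ y i)
    (h0 : ∀ i ∈ s, y i = 0 → w i = 0) :
    klTerm (∑ i ∈ s, w i) (∑ i ∈ s, y i) ≤ ∑ i ∈ s, klTerm (w i) (y i) := by
  induction s using Finset.cons_induction with
  | empty => simp
  | cons a s ha ih =>
    rw [Finset.sum_cons, Finset.sum_cons, Finset.sum_cons]
    have hws : 0 ≤ ∑ i ∈ s, w i := Finset.sum_nonneg fun i hi => hw i (Finset.mem_cons_of_mem hi)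
    have hys : 0 ≤ ∑ i ∈ s, y i := Finset.sum_nonneg fun i hi => hy i (Finset.mem_cons_of_mem hi)
    have step : klTerm (w a + ∑ i ∈ s, w i) (y a + ∑ i ∈ s, y i) ≤
        klTerm (w a) (y a) + klTerm (∑ i ∈ s, w i) (∑ i ∈ s, y i) := by
      refine klTerm_add_le (hw a (Finset.mem_cons_self a s)) hws
        (hy a (Finset.mem_cons_self a s)) hys
        (fun h => h0 a (Finset.mem_cons_self a s) h) (fun h => ?_)
      have hz : ∀ i ∈ s, y i = 0 := by
        intro i hi
        exact (Finset.sum_eq_zero_iff_of_nonneg fun j hj => hy j (Finset.mem_cons_of_mem hj)).mp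
          h i hi
      exact Finset.sum_eq_zero fun i hi => h0 i (Finset.mem_cons_of_mem hi) (hz i hi)
    refine step.trans (add_le_add le_rfl (ih ?_ ?_ ?_)) <;>
      intro i hi <;>
      [exact hw i (Finset.mem_cons_of_mem hi); exact hy i (Finset.mem_cons_of_mem hi);
       exact h0 i (Finset.mem_cons_of_mem hi)]

lemma klTerm_nonpos {x y : ℝ} (hx : 0 ≤ x) (hxy : x ≤ y) : klTerm x y ≤ 0 := by
  rcases eq_or_lt_of_le hx with h | h
  · simp [← h]
  · have hy : 0 < y := lt_of_lt_of_le h hxy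
    have : Real.log (x / y) ≤ 0 :=
      Real.log_nonpos (by positivity) ((div_le_one hy).mpr hxy)
    exact mul_nonpos_of_nonneg_of_nonpos hx this

lemma binEntropy_eq (x : ℝ) :
    binEntropy x = Real.negMulLog x + Real.negMulLog (1 - x) := by
  simp [binEntropy, Real.negMulLog]
  ring

lemma binEntropy_one_sub (x : ℝ) : binEntropy (1 - x) = binEntropy x := by
  rw [binEntropy_eq, binEntropy_eq, sub_sub_cancel, add_comm]

@[simp] lemma binEntropy_zero : binEntropy 0 = 0 := by simp [binEntropy]

lemma mul_log_le_add {u v : ℝ} (hu : 0 ≤ u) (hv : 0 ≤ v) :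
    u * Real.log u ≤ u * Real.log (u + v) := by
  rcases eq_or_lt_of_le hu with h | h
  · simp [← h]
  · exact mul_le_mul_of_nonneg_left (Real.log_le_log h (by linarith)) h.le

lemma negMulLog_add_le {u v : ℝ} (hu : 0 ≤ u) (hv : 0 ≤ v) :
    Real.negMulLog (u + v) ≤ Real.negMulLog u + Real.negMulLog v := by
  have h1 := mul_log_le_add hu hv
  have h2 := mul_log_le_add hv hu
  rw [add_comm v u] at h2
  simp only [Real.negMulLog, neg_mul]
  nlinarith [h1, h2]

section marg

variable {A B : Type*} [Fintype A] [Fintype B]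

/-- `condEntropy` as a sum of KL terms against the `B`-marginal. -/
lemma condEntropy_eq_klTerm (p : A × B → ℝ) (hp : ∀ x, 0 ≤ p x) :
    condEntropy p = -∑ b, ∑ a, klTerm (p (a, b)) (∑ a', p (a', b)) := by
  unfold condEntropy entropy
  rw [← Finset.sum_neg_distrib]
  refine Finset.sum_congr rfl fun b _ => ?_
  simp only
  have hPb : 0 ≤ ∑ a', p (a', b) := Finset.sum_nonneg fun a _ => hp _
  rcases eq_or_lt_of_le hPb with h0 | hpos
  · have hz : ∀ a ∈ Finset.univ, p (a, b) = 0 :=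
      (Finset.sum_eq_zero_iff_of_nonneg fun a _ => hp _).mp h0.symm
    have hzz : ∀ a ∈ Finset.univ (α := A), klTerm (p (a, b)) (0 : ℝ) = 0 :=
      fun a ha => by rw [hz a ha]; simp
    rw [← h0, zero_mul, Finset.sum_eq_zero hzz, neg_zero]
  · rw [Finset.mul_sum, ← Finset.sum_neg_distrib]
    refine Finset.sum_congr rfl fun a _ => ?_
    set L := Real.log (p (a, b) / ∑ a', p (a', b)) with hL
    show (∑ a', p (a', b)) * -(p (a, b) / (∑ a', p (a', b)) * L) = -(p (a, b) * L)
    field_simp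

lemma marg_pos_of_mem {p : A × B → ℝ} (hp : ∀ x, 0 ≤ p x) {a : A} {b : B}
    (h : 0 < p (a, b)) : 0 < ∑ a', p (a', b) :=
  lt_of_lt_of_le h (Finset.single_le_sum (fun a' _ => hp (a', b)) (Finset.mem_univ a))

/-- `condEntropy p = H(p) - H(p_B)`. -/
lemma condEntropy_eq_sub (p : A × B → ℝ) (hp : ∀ x, 0 ≤ p x) :
    condEntropy p = (∑ x, Real.negMulLog (p x)) - ∑ b, Real.negMulLog (∑ a, p (a, b)) := by
  rw [condEntropy_eq_klTerm p hp]
  have key : ∀ b, ∀ a, -klTerm (p (a, b)) (∑ a', p (a', b)) =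
      Real.negMulLog (p (a, b)) + p (a, b) * Real.log (∑ a', p (a', b)) := by
    intro b a
    rcases eq_or_lt_of_le (hp (a, b)) with h0 | hpos
    · simp [← h0, Real.negMulLog]
    · have hPb := marg_pos_of_mem hp hpos
      unfold klTerm
      rw [Real.log_div hpos.ne' hPb.ne', Real.negMulLog]
      ring
  calc -∑ b, ∑ a, klTerm (p (a, b)) (∑ a', p (a', b))
      = ∑ b, ∑ a, (Real.negMulLog (p (a, b)) + p (a, b) * Real.log (∑ a', p (a', b))) := by
        rw [← Finset.sum_neg_distrib]
        exact Finset.sum_congr rfl fun b _ => by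
          rw [← Finset.sum_neg_distrib]
          exact Finset.sum_congr rfl fun a _ => key b a
    _ = (∑ b, ∑ a, Real.negMulLog (p (a, b))) +
          ∑ b, (∑ a, p (a, b)) * Real.log (∑ a', p (a', b)) := by
        rw [← Finset.sum_add_distrib]
        exact Finset.sum_congr rfl fun b _ => by
          rw [Finset.sum_add_distrib, Finset.sum_mul]
    _ = (∑ x, Real.negMulLog (p x)) - ∑ b, Real.negMulLog (∑ a, p (a, b)) := by
        congr 1
        · rw [Fintype.sum_prod_type]
          exact Finset.sum_comm
        · rw [← Finset.sum_neg_distrib]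
          exact Finset.sum_congr rfl fun b _ => by simp [Real.negMulLog]

lemma condEntropy_nonneg (p : A × B → ℝ) (hp : ∀ x, 0 ≤ p x) : 0 ≤ condEntropy p := by
  rw [condEntropy_eq_klTerm p hp, le_neg]
  refine (Finset.sum_nonpos fun b _ => Finset.sum_nonpos fun a _ => ?_).trans_eq (neg_zero).symm
  exact klTerm_nonpos (hp _)
    (Finset.single_le_sum (fun a' _ => hp (a', b)) (Finset.mem_univ a))

lemma condEntropy_le_log_card [Nonempty A] (p : A × B → ℝ) (hp : ∀ x, 0 ≤ p x)
    (hpsum : ∑ x, p x = 1) : condEntropy p ≤ Real.log (Fintype.card A) := by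
  have hcard : (0:ℝ) < Fintype.card A := by
    have := Fintype.card_pos (α := A)
    positivity
  rw [condEntropy_eq_klTerm p hp, neg_le]
  have hmarg : ∑ b, ∑ a, p (a, b) = 1 := by
    rw [← hpsum, Fintype.sum_prod_type]
    exact Finset.sum_comm
  have key : ∀ b, -((∑ a, p (a, b)) * Real.log (Fintype.card A)) ≤
      ∑ a, klTerm (p (a, b)) (∑ a', p (a', b)) := by
    intro b
    have hPb : 0 ≤ ∑ a', p (a', b) := Finset.sum_nonneg fun a _ => hp _
    have h := klTerm_sum_le Finset.univ (fun a => p (a, b)) (fun _ => ∑ a', p (a', b))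
      (fun a _ => hp _) (fun a _ => hPb)
      (fun a _ hy => by
        by_contra hne
        exact absurd hy (ne_of_gt (marg_pos_of_mem hp (lt_of_le_of_ne (hp _) (Ne.symm hne)))))
    rw [Finset.sum_const, Finset.card_univ, nsmul_eq_mul] at h
    simp only at h
    refine le_trans (le_of_eq ?_) h
    rcases eq_or_lt_of_le hPb with h0 | hpos
    · rw [← h0]
      simp
    · unfold klTerm
      have e : (∑ a, p (a, b)) / ((Fintype.card A : ℝ) * ∑ a', p (a', b)) =
          ((Fintype.card A : ℝ))⁻¹ := by
        field_simp
      rw [e, Real.log_inv]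
      ring
  calc -Real.log (Fintype.card A)
      = -∑ b, (∑ a, p (a, b)) * Real.log (Fintype.card A) := by
        rw [← Finset.sum_mul, hmarg, one_mul]
    _ ≤ ∑ b, ∑ a, klTerm (p (a, b)) (∑ a', p (a', b)) := by
        rw [← Finset.sum_neg_distrib]
        exact Finset.sum_le_sum fun b _ => key b

end marg

section mix

/-- Concavity of `∑ negMulLog`. -/
lemma sum_negMulLog_concave {S : Type*} [Fintype S] (x y : S → ℝ)
    (hx : ∀ i, 0 ≤ x i) (hy : ∀ i, 0 ≤ y i) {l : ℝ} (h0 : 0 ≤ l) (h1 : l ≤ 1) :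
    l * ∑ i, Real.negMulLog (x i) + (1 - l) * ∑ i, Real.negMulLog (y i) ≤
      ∑ i, Real.negMulLog (l * x i + (1 - l) * y i) := by
  rw [Finset.mul_sum, Finset.mul_sum, ← Finset.sum_add_distrib]
  refine Finset.sum_le_sum fun i _ => ?_
  have h := Real.concaveOn_negMulLog.2 (Set.mem_Ici.2 (hx i)) (Set.mem_Ici.2 (hy i))
    h0 (show (0:ℝ) ≤ 1 - l by linarith) (by ring : l + (1 - l) = (1:ℝ))
  simpa [smul_eq_mul] using h

/-- Almost-convexity of `∑ negMulLog` for pmfs. -/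
lemma sum_negMulLog_mix_le {S : Type*} [Fintype S] (x y : S → ℝ)
    (hx : ∀ i, 0 ≤ x i) (hy : ∀ i, 0 ≤ y i)
    (hx1 : ∑ i, x i = 1) (hy1 : ∑ i, y i = 1) {l : ℝ} (h0 : 0 ≤ l) (h1 : l ≤ 1) :
    ∑ i, Real.negMulLog (l * x i + (1 - l) * y i) ≤
      l * ∑ i, Real.negMulLog (x i) + (1 - l) * ∑ i, Real.negMulLog (y i) + binEntropy l := by
  have step : ∀ i, Real.negMulLog (l * x i + (1 - l) * y i) ≤
      (l * Real.negMulLog (x i) + x i * Real.negMulLog l) +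
        ((1 - l) * Real.negMulLog (y i) + y i * Real.negMulLog (1 - l)) := by
    intro i
    calc Real.negMulLog (l * x i + (1 - l) * y i)
        ≤ Real.negMulLog (l * x i) + Real.negMulLog ((1 - l) * y i) :=
          negMulLog_add_le (mul_nonneg h0 (hx i)) (mul_nonneg (by linarith) (hy i))
      _ = _ := by rw [Real.negMulLog_mul, Real.negMulLog_mul]; ring
  calc ∑ i, Real.negMulLog (l * x i + (1 - l) * y i)
      ≤ ∑ i, ((l * Real.negMulLog (x i) + x i * Real.negMulLog l) +
          ((1 - l) * Real.negMulLog (y i) + y i * Real.negMulLog (1 - l))) :=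
        Finset.sum_le_sum fun i _ => step i
    _ = l * ∑ i, Real.negMulLog (x i) + (1 - l) * ∑ i, Real.negMulLog (y i) + binEntropy l := by
        rw [binEntropy_eq]
        simp only [Finset.sum_add_distrib, ← Finset.mul_sum, ← Finset.sum_mul, hx1, hy1]
        ring

variable {A B : Type*} [Fintype A] [Fintype B]

lemma marg_zero {p : A × B → ℝ} (hp : ∀ x, 0 ≤ p x) {b : B}
    (h : ∑ a', p (a', b) = 0) (a : A) : p (a, b) = 0 :=
  (Finset.sum_eq_zero_iff_of_nonneg fun a _ => hp _).mp h a (Finset.mem_univ a)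

/-- Concavity of conditional entropy. -/
lemma condEntropy_concave (p r : A × B → ℝ) (hp : ∀ x, 0 ≤ p x) (hr : ∀ x, 0 ≤ r x)
    {l : ℝ} (h0 : 0 ≤ l) (h1 : l ≤ 1) :
    l * condEntropy p + (1 - l) * condEntropy r ≤
      condEntropy (fun x => l * p x + (1 - l) * r x) := by
  have hmix : ∀ x : A × B, 0 ≤ l * p x + (1 - l) * r x := fun x => by
    have := hp x; have := hr x; nlinarith
  rw [condEntropy_eq_klTerm p hp, condEntropy_eq_klTerm r hr, condEntropy_eq_klTerm _ hmix]
  rw [mul_neg, mul_neg, ← neg_add, neg_le_neg_iff]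
  rw [Finset.mul_sum, Finset.mul_sum, ← Finset.sum_add_distrib]
  refine Finset.sum_le_sum fun b _ => ?_
  rw [Finset.mul_sum, Finset.mul_sum, ← Finset.sum_add_distrib]
  refine Finset.sum_le_sum fun a _ => ?_
  have hsplit : ∑ a', (l * p (a', b) + (1 - l) * r (a', b)) =
      l * ∑ a', p (a', b) + (1 - l) * ∑ a', r (a', b) := by
    rw [Finset.sum_add_distrib, Finset.mul_sum, Finset.mul_sum]
  rw [hsplit]
  have hPb : 0 ≤ ∑ a', p (a', b) := Finset.sum_nonneg fun a' _ => hp _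
  have hRb : 0 ≤ ∑ a', r (a', b) := Finset.sum_nonneg fun a' _ => hr _
  calc klTerm (l * p (a, b) + (1 - l) * r (a, b))
          (l * ∑ a', p (a', b) + (1 - l) * ∑ a', r (a', b))
      ≤ klTerm (l * p (a, b)) (l * ∑ a', p (a', b)) +
          klTerm ((1 - l) * r (a, b)) ((1 - l) * ∑ a', r (a', b)) := by
        refine klTerm_add_le (mul_nonneg h0 (hp _)) (mul_nonneg (by linarith) (hr _))
          (mul_nonneg h0 hPb) (mul_nonneg (by linarith) hRb) (fun h => ?_) (fun h => ?_)
        · rcases mul_eq_zero.mp h with h' | h'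
          · rw [h', zero_mul]
          · rw [marg_zero hp h' a, mul_zero]
        · rcases mul_eq_zero.mp h with h' | h'
          · rw [h', zero_mul]
          · rw [marg_zero hr h' a, mul_zero]
    _ = l * klTerm (p (a, b)) (∑ a', p (a', b)) +
          (1 - l) * klTerm (r (a, b)) (∑ a', r (a', b)) := by
        rw [klTerm_smul h0, klTerm_smul (by linarith : (0:ℝ) ≤ 1 - l)]

/-- Almost-convexity of conditional entropy. -/
lemma condEntropy_mix_le (p r : A × B → ℝ) (hp : ∀ x, 0 ≤ p x) (hr : ∀ x, 0 ≤ r x)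
    (hp1 : ∑ x, p x = 1) (hr1 : ∑ x, r x = 1) {l : ℝ} (h0 : 0 ≤ l) (h1 : l ≤ 1) :
    condEntropy (fun x => l * p x + (1 - l) * r x) ≤
      l * condEntropy p + (1 - l) * condEntropy r + binEntropy l := by
  have hmix : ∀ x : A × B, 0 ≤ l * p x + (1 - l) * r x := fun x => by
    have := hp x; have := hr x; nlinarith
  rw [condEntropy_eq_sub p hp, condEntropy_eq_sub r hr, condEntropy_eq_sub _ hmix]
  have hsplit : ∀ b : B, ∑ a, (l * p (a, b) + (1 - l) * r (a, b)) =
      l * ∑ a, p (a, b) + (1 - l) * ∑ a, r (a, b) := fun b => by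
    rw [Finset.sum_add_distrib, Finset.mul_sum, Finset.mul_sum]
  have hjoint : ∑ x : A × B, Real.negMulLog (l * p x + (1 - l) * r x) ≤
      l * ∑ x, Real.negMulLog (p x) + (1 - l) * ∑ x, Real.negMulLog (r x) + binEntropy l :=
    sum_negMulLog_mix_le p r hp hr hp1 hr1 h0 h1
  have hmarg : l * ∑ b, Real.negMulLog (∑ a, p (a, b)) +
      (1 - l) * ∑ b, Real.negMulLog (∑ a, r (a, b)) ≤
      ∑ b, Real.negMulLog (∑ a, (l * p (a, b) + (1 - l) * r (a, b))) := by
    calc l * ∑ b, Real.negMulLog (∑ a, p (a, b)) +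
        (1 - l) * ∑ b, Real.negMulLog (∑ a, r (a, b))
        ≤ ∑ b, Real.negMulLog (l * (∑ a, p (a, b)) + (1 - l) * ∑ a, r (a, b)) :=
          sum_negMulLog_concave _ _ (fun b => Finset.sum_nonneg fun a _ => hp _)
            (fun b => Finset.sum_nonneg fun a _ => hr _) h0 h1
      _ = _ := by
          exact Finset.sum_congr rfl fun b _ => by rw [hsplit b]
  linarith

end mix

lemma tvDist_nonneg {S : Type*} [Fintype S] (p q : S → ℝ) : 0 ≤ tvDist p q := by
  unfold tvDist
  have : 0 ≤ ∑ x, |p x - q x| := Finset.sum_nonneg fun x _ => abs_nonneg _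
  linarith

lemma tvDist_comm {S : Type*} [Fintype S] (p q : S → ℝ) : tvDist p q = tvDist q p := by
  unfold tvDist
  congr 1
  exact Finset.sum_congr rfl fun x _ => abs_sub_comm _ _

lemma max_sub_eq (a b : ℝ) : max (a - b) 0 = (|a - b| + (a - b)) / 2 := by
  rcases le_total a b with h | h
  · rw [max_eq_right (by linarith), abs_of_nonpos (by linarith)]
    ring
  · rw [max_eq_left (by linarith), abs_of_nonneg (by linarith)]
    ring

/-- **Classical Alicki–Fannes / Winter continuity bound** for conditional entropy. -/
lemma af_bound {A B : Type*} [Fintype A] [Fintype B] [Nonempty A] (p q : A × B → ℝ)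
    (hp : ∀ x, 0 ≤ p x) (hp1 : ∑ x, p x = 1)
    (hq : ∀ x, 0 ≤ q x) (hq1 : ∑ x, q x = 1)
    {s : ℝ} (hs : 0 < s) (htv : tvDist p q ≤ s) :
    condEntropy p - condEntropy q ≤
      s * Real.log (Fintype.card A) + (1 + s) * binEntropy (s / (1 + s)) := by
  have h1s : (0:ℝ) < 1 + s := by linarith
  set t := tvDist p q with ht
  have ht0 : 0 ≤ t := tvDist_nonneg p q
  have hsub : ∑ x : A × B, (q x - p x) = 0 := by
    rw [Finset.sum_sub_distrib, hq1, hp1, sub_self]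
  have habs : ∑ x : A × B, |q x - p x| = 2 * t := by
    rw [ht]
    unfold tvDist
    rw [Finset.sum_congr rfl fun x _ => abs_sub_comm (q x) (p x)]
    ring
  have hsum_max₁ : ∑ x : A × B, max (q x - p x) 0 = t := by
    rw [Finset.sum_congr rfl fun x _ => max_sub_eq (q x) (p x)]
    rw [← Finset.sum_div, Finset.sum_add_distrib, habs, hsub]
    ring
  have hsum_max₂ : ∑ x : A × B, max (p x - q x) 0 = t := by
    have habs' : ∑ x : A × B, |p x - q x| = 2 * t := by
      rw [ht]; unfold tvDist; ring
    have hsub' : ∑ x : A × B, (p x - q x) = 0 := by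
      rw [Finset.sum_sub_distrib, hq1, hp1, sub_self]
    rw [Finset.sum_congr rfl fun x _ => max_sub_eq (p x) (q x)]
    rw [← Finset.sum_div, Finset.sum_add_distrib, habs', hsub']
    ring
  set Dp : A × B → ℝ := fun x => (max (q x - p x) 0 + (s - t) * p x) / s with hDp
  set Dq : A × B → ℝ := fun x => (max (p x - q x) 0 + (s - t) * p x) / s with hDq
  have hst : t ≤ s := htv
  have hDp0 : ∀ x, 0 ≤ Dp x := fun x => by
    have h1 : (0:ℝ) ≤ max (q x - p x) 0 := le_max_right _ _
    have h2 : 0 ≤ (s - t) * p x := mul_nonneg (by linarith) (hp x)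
    positivity
  have hDq0 : ∀ x, 0 ≤ Dq x := fun x => by
    have h1 : (0:ℝ) ≤ max (p x - q x) 0 := le_max_right _ _
    have h2 : 0 ≤ (s - t) * p x := mul_nonneg (by linarith) (hp x)
    positivity
  have hDp1 : ∑ x, Dp x = 1 := by
    rw [hDp]
    simp only
    rw [← Finset.sum_div, Finset.sum_add_distrib, hsum_max₁, ← Finset.mul_sum, hp1]
    field_simp
    ring
  have hDq1 : ∑ x, Dq x = 1 := by
    rw [hDq]
    simp only
    rw [← Finset.sum_div, Finset.sum_add_distrib, hsum_max₂, ← Finset.mul_sum, hp1]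
    field_simp
    ring
  have pointeq : ∀ x, max (q x - p x) 0 + p x = max (p x - q x) 0 + q x := by
    intro x
    rcases le_total (p x) (q x) with h | h
    · rw [max_eq_left (by linarith), max_eq_right (by linarith)]
      ring
    · rw [max_eq_right (by linarith), max_eq_left (by linarith)]
      ring
  have hl0 : (0:ℝ) ≤ 1 / (1 + s) := by positivity
  have hl1 : 1 / (1 + s) ≤ 1 := by
    rw [div_le_one h1s]; linarith
  have hfuneq : (fun x => (1 / (1 + s)) * p x + (1 - 1 / (1 + s)) * Dp x) =
      (fun x => (1 / (1 + s)) * q x + (1 - 1 / (1 + s)) * Dq x) := by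
    funext x
    have hM : max (q x - p x) 0 = max (p x - q x) 0 + q x - p x := by
      linarith [pointeq x]
    rw [hDp, hDq]
    simp only
    rw [hM]
    field_simp
    ring
  have hconc := condEntropy_concave p Dp hp hDp0 hl0 hl1
  rw [hfuneq] at hconc
  have hmixle := condEntropy_mix_le q Dq hq hDq0 hq1 hDq1 hl0 hl1
  have hub := condEntropy_le_log_card Dq hDq0 hDq1
  have hlb := condEntropy_nonneg Dp hDp0
  have h1l : (0:ℝ) ≤ 1 - 1 / (1 + s) := by linarith
  have step : (1 / (1 + s)) * (condEntropy p - condEntropy q) ≤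
      (1 - 1 / (1 + s)) * Real.log (Fintype.card A) + binEntropy (1 / (1 + s)) := by
    nlinarith [mul_le_mul_of_nonneg_left hub h1l, mul_nonneg h1l hlb]
  have hbe : binEntropy (1 / (1 + s)) = binEntropy (s / (1 + s)) := by
    rw [show (1:ℝ) / (1 + s) = 1 - s / (1 + s) by field_simp; ring]
    exact binEntropy_one_sub _
  have h1l' : 1 - 1 / (1 + s) = s / (1 + s) := by field_simp; ring
  calc condEntropy p - condEntropy q
      = (1 + s) * ((1 / (1 + s)) * (condEntropy p - condEntropy q)) := by
        field_simp
    _ ≤ (1 + s) * ((1 - 1 / (1 + s)) * Real.log (Fintype.card A) +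
          binEntropy (1 / (1 + s))) := mul_le_mul_of_nonneg_left step h1s.le
    _ = s * Real.log (Fintype.card A) + (1 + s) * binEntropy (s / (1 + s)) := by
        rw [hbe, h1l']
        field_simp

/-- helper: `2 w² ≤ -log (1-w)` on `[0,1)`. -/
lemma two_sq_le_neg_log {w : ℝ} (h0 : 0 ≤ w) (h1 : w < 1) :
    2 * w ^ 2 ≤ -Real.log (1 - w) := by
  have hd : ∀ z : ℝ, z < 1 → HasDerivAt (fun z : ℝ => -Real.log (1 - z) - 2 * z ^ 2)
      ((1 - z)⁻¹ - 4 * z) z := by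
    intro z hz
    have h2 : HasDerivAt (fun z : ℝ => 1 - z) (-1) z := (hasDerivAt_id z).const_sub 1
    have h3 : HasDerivAt (fun z : ℝ => Real.log (1 - z)) ((1 - z)⁻¹ * -1) z :=
      (Real.hasDerivAt_log (by intro h; linarith [sub_eq_zero.mp h])).comp z h2
    have h7 : HasDerivAt (fun z : ℝ => 2 * z ^ 2) (2 * (2 * z ^ 1 * 1)) z :=
      ((hasDerivAt_id z).pow 2).const_mul 2
    have := (h3.neg).sub h7
    exact this.congr_deriv (by ring)
  have hmono : MonotoneOn (fun z : ℝ => -Real.log (1 - z) - 2 * z ^ 2) (Set.Icc 0 w) := by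
    apply monotoneOn_of_deriv_nonneg (convex_Icc 0 w)
    · intro z hz
      exact ((hd z (lt_of_le_of_lt hz.2 h1)).differentiableAt).continuousAt.continuousWithinAt
    · intro z hz
      rw [interior_Icc] at hz
      exact ((hd z (lt_trans hz.2 h1)).differentiableAt).differentiableWithinAt
    · intro z hz
      rw [interior_Icc] at hz
      have hz1 : z < 1 := lt_trans hz.2 h1
      rw [(hd z hz1).deriv]
      have hpos : (0:ℝ) < 1 - z := by linarith
      have key : (1 - z)⁻¹ - 4 * z = (2 * z - 1) ^ 2 / (1 - z) := by
        field_simp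
        ring
      rw [key]
      positivity
  have := hmono (Set.left_mem_Icc.mpr h0) (Set.right_mem_Icc.mpr h0) h0
  simp only [sub_zero, Real.log_one, neg_zero] at this
  nlinarith [this]

/-- derivative of the binary-Pinsker gap function. -/
lemma g_hasDerivAt (P : ℝ) {z : ℝ} (hz0 : 0 < z) (hz1 : z < 1) :
    HasDerivAt (fun z : ℝ => P * Real.log P - P * Real.log z + (1 - P) * Real.log (1 - P) -
      (1 - P) * Real.log (1 - z) - 2 * (P - z) ^ 2)
      (-(P / z) + (1 - P) / (1 - z) + 4 * (P - z)) z := by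
  have h1 : HasDerivAt (fun z : ℝ => P * Real.log z) (P * z⁻¹) z :=
    (Real.hasDerivAt_log hz0.ne').const_mul P
  have h2 : HasDerivAt (fun z : ℝ => 1 - z) (-1) z := (hasDerivAt_id z).const_sub 1
  have h3 : HasDerivAt (fun z : ℝ => Real.log (1 - z)) ((1 - z)⁻¹ * -1) z :=
    (Real.hasDerivAt_log (by intro h; linarith [sub_eq_zero.mp h])).comp z h2
  have h4 : HasDerivAt (fun z : ℝ => (1 - P) * Real.log (1 - z)) ((1 - P) * ((1 - z)⁻¹ * -1)) z :=
    h3.const_mul (1 - P)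
  have h5 : HasDerivAt (fun z : ℝ => P - z) (-1) z := (hasDerivAt_id z).const_sub P
  have h6 : HasDerivAt (fun z : ℝ => 2 * (P - z) ^ 2) (2 * (2 * (P - z) ^ 1 * -1)) z :=
    (h5.pow 2).const_mul 2
  have H := ((((hasDerivAt_const z (P * Real.log P)).sub h1).add
    (hasDerivAt_const z ((1 - P) * Real.log (1 - P)))).sub h4).sub h6
  refine H.congr_deriv ?_
  have hzne : z ≠ 0 := hz0.ne'
  have hz1ne : 1 - z ≠ 0 := by intro h; linarith [sub_eq_zero.mp h]
  field_simp
  ring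

/-- Binary Pinsker inequality. -/
lemma pinsker_binary {P Q : ℝ} (hP0 : 0 ≤ P) (hP1 : P ≤ 1) (hQ0 : 0 ≤ Q) (hQ1 : Q ≤ 1)
    (h0 : Q = 0 → P = 0) (h1 : Q = 1 → P = 1) :
    2 * (P - Q) ^ 2 ≤ klTerm P Q + klTerm (1 - P) (1 - Q) := by
  by_cases hQz : Q = 0
  · rw [hQz, h0 hQz]
    simp [klTerm]
  by_cases hQo : Q = 1
  · rw [hQo, h1 hQo]
    simp [klTerm]
  have hQpos : 0 < Q := lt_of_le_of_ne hQ0 (Ne.symm hQz)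
  have hQlt : Q < 1 := lt_of_le_of_ne hQ1 hQo
  set g : ℝ → ℝ := fun z => P * Real.log P - P * Real.log z + (1 - P) * Real.log (1 - P) -
      (1 - P) * Real.log (1 - z) - 2 * (P - z) ^ 2 with hg
  have e1 : klTerm P Q = P * Real.log P - P * Real.log Q := by
    rcases eq_or_lt_of_le hP0 with h | h
    · simp [klTerm, ← h]
    · unfold klTerm
      rw [Real.log_div h.ne' hQpos.ne']
      ring
  have e2 : klTerm (1 - P) (1 - Q) = (1 - P) * Real.log (1 - P) - (1 - P) * Real.log (1 - Q) := by
    rcases eq_or_lt_of_le (by linarith : (0:ℝ) ≤ 1 - P) with h | h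
    · simp [klTerm, ← h]
    · unfold klTerm
      rw [Real.log_div h.ne' (by linarith : (1:ℝ) - Q ≠ 0)]
      ring
  have hgoal : 0 ≤ g Q := by
    by_cases hPz : P = 0
    · rw [hg]
      simp only [hPz]
      have := two_sq_le_neg_log hQ0 hQlt
      simp only [zero_mul, sub_zero, zero_sub, zero_add, Real.log_one, mul_zero, one_mul,
        sub_self]
      ring_nf
      ring_nf at this
      nlinarith [this]
    by_cases hPo : P = 1
    · rw [hg]
      simp only [hPo]
      have := two_sq_le_neg_log (by linarith : (0:ℝ) ≤ 1 - Q) (by linarith : 1 - Q < 1)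
      rw [sub_sub_cancel] at this
      simp only [Real.log_one, mul_zero, sub_self, one_mul, mul_one, zero_mul]
      ring_nf
      ring_nf at this
      nlinarith [this]
    have hPpos : 0 < P := lt_of_le_of_ne hP0 (Ne.symm hPz)
    have hPlt : P < 1 := lt_of_le_of_ne hP1 hPo
    have hgP : g P = 0 := by rw [hg]; ring
    have hderiv_eq : ∀ z : ℝ, 0 < z → z < 1 →
        -(P / z) + (1 - P) / (1 - z) + 4 * (P - z) =
          (z - P) * (2 * z - 1) ^ 2 / (z * (1 - z)) := by
      intro z hz0 hz1
      have : z ≠ 0 := hz0.ne'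
      have : (1:ℝ) - z ≠ 0 := by intro h; linarith [sub_eq_zero.mp h]
      field_simp
      ring
    rcases le_or_gt P Q with hPQ | hPQ
    · have hmono : MonotoneOn g (Set.Icc P Q) := by
        apply monotoneOn_of_deriv_nonneg (convex_Icc P Q)
        · intro z hz
          exact ((g_hasDerivAt P (lt_of_lt_of_le hPpos hz.1)
            (lt_of_le_of_lt hz.2 hQlt)).differentiableAt).continuousAt.continuousWithinAt
        · intro z hz
          rw [interior_Icc] at hz
          exact ((g_hasDerivAt P (lt_trans hPpos hz.1)
            (lt_trans hz.2 hQlt)).differentiableAt).differentiableWithinAt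
        · intro z hz
          rw [interior_Icc] at hz
          have hz0 : 0 < z := lt_trans hPpos hz.1
          have hz1 : z < 1 := lt_trans hz.2 hQlt
          rw [(g_hasDerivAt P hz0 hz1).deriv, hderiv_eq z hz0 hz1]
          have h1 : (0:ℝ) ≤ z - P := by linarith [hz.1]
          have h2 : (0:ℝ) < z * (1 - z) := by nlinarith
          positivity
      have := hmono (Set.left_mem_Icc.mpr hPQ) (Set.right_mem_Icc.mpr hPQ) hPQ
      rw [hgP] at this
      exact this
    · have hanti : AntitoneOn g (Set.Icc Q P) := by
        apply antitoneOn_of_deriv_nonpos (convex_Icc Q P)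
        · intro z hz
          exact ((g_hasDerivAt P (lt_of_lt_of_le hQpos hz.1)
            (lt_of_le_of_lt hz.2 hPlt)).differentiableAt).continuousAt.continuousWithinAt
        · intro z hz
          rw [interior_Icc] at hz
          exact ((g_hasDerivAt P (lt_trans hQpos hz.1)
            (lt_trans hz.2 hPlt)).differentiableAt).differentiableWithinAt
        · intro z hz
          rw [interior_Icc] at hz
          have hz0 : 0 < z := lt_trans hQpos hz.1
          have hz1 : z < 1 := lt_trans hz.2 hPlt
          rw [(g_hasDerivAt P hz0 hz1).deriv, hderiv_eq z hz0 hz1]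
          have h2 : (0:ℝ) < z * (1 - z) := by nlinarith
          apply div_nonpos_of_nonpos_of_nonneg _ h2.le
          exact mul_nonpos_iff.mpr (Or.inr ⟨by linarith [hz.2], sq_nonneg _⟩)
      have := hanti (Set.left_mem_Icc.mpr hPQ.le) (Set.right_mem_Icc.mpr hPQ.le) hPQ.le
      rw [hgP] at this
      exact this
  rw [e1, e2]
  rw [hg] at hgoal
  simp only at hgoal
  linarith

/-- Pinsker's inequality for finite pmfs. -/
lemma pinsker {S : Type*} [Fintype S] (p q : S → ℝ)
    (hp : ∀ x, 0 ≤ p x) (hpsum : ∑ x, p x = 1)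
    (hq : ∀ x, 0 ≤ q x) (hqsum : ∑ x, q x = 1)
    (h0 : ∀ x, q x = 0 → p x = 0) :
    2 * tvDist p q ^ 2 ≤ klDiv p q := by
  classical
  set E : Finset S := Finset.univ.filter (fun x => q x ≤ p x) with hE
  set F : Finset S := Finset.univ.filter (fun x => ¬ q x ≤ p x) with hF
  have hsplit : ∀ f : S → ℝ, (∑ x ∈ E, f x) + (∑ x ∈ F, f x) = ∑ x, f x := fun f =>
    Finset.sum_filter_add_sum_filter_not Finset.univ _ f
  set P := ∑ x ∈ E, p x with hP
  set Q := ∑ x ∈ E, q x with hQ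
  have hP0 : 0 ≤ P := Finset.sum_nonneg fun x _ => hp x
  have hQ0 : 0 ≤ Q := Finset.sum_nonneg fun x _ => hq x
  have hPF0 : 0 ≤ ∑ x ∈ F, p x := Finset.sum_nonneg fun x _ => hp x
  have hQF0 : 0 ≤ ∑ x ∈ F, q x := Finset.sum_nonneg fun x _ => hq x
  have hP1 : P ≤ 1 := by
    have := hsplit p
    rw [hpsum] at this
    linarith
  have hQ1 : Q ≤ 1 := by
    have := hsplit q
    rw [hqsum] at this
    linarith
  have hPF : ∑ x ∈ F, p x = 1 - P := by
    have := hsplit p; rw [hpsum] at this; linarith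
  have hQF : ∑ x ∈ F, q x = 1 - Q := by
    have := hsplit q; rw [hqsum] at this; linarith
  -- tvDist = P - Q
  have htv : tvDist p q = P - Q := by
    unfold tvDist
    rw [← hsplit (fun x => |p x - q x|)]
    have hEabs : ∑ x ∈ E, |p x - q x| = P - Q := by
      rw [hP, hQ, ← Finset.sum_sub_distrib]
      refine Finset.sum_congr rfl fun x hx => ?_
      rw [hE] at hx
      exact abs_of_nonneg (by linarith [(Finset.mem_filter.mp hx).2])
    have hFabs : ∑ x ∈ F, |p x - q x| = (1 - Q) - (1 - P) := by
      rw [← hQF, ← hPF, ← Finset.sum_sub_distrib]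
      refine Finset.sum_congr rfl fun x hx => ?_
      rw [hF] at hx
      have := (Finset.mem_filter.mp hx).2
      rw [abs_of_nonpos (by linarith [lt_of_not_ge this])]
      ring
    rw [hEabs, hFabs]
    ring
  have hklE : klTerm P Q ≤ ∑ x ∈ E, klTerm (p x) (q x) :=
    klTerm_sum_le E p q (fun x _ => hp x) (fun x _ => hq x) (fun x _ hx => h0 x hx)
  have hklF : klTerm (1 - P) (1 - Q) ≤ ∑ x ∈ F, klTerm (p x) (q x) := by
    rw [← hPF, ← hQF]
    exact klTerm_sum_le F p q (fun x _ => hp x) (fun x _ => hq x) (fun x _ hx => h0 x hx)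
  have hzero : Q = 0 → P = 0 := by
    intro hQz
    refine Finset.sum_eq_zero fun x hx => h0 x ?_
    exact (Finset.sum_eq_zero_iff_of_nonneg fun x _ => hq x).mp hQz x hx
  have hone : Q = 1 → P = 1 := by
    intro hQo
    have hQFz : ∑ x ∈ F, q x = 0 := by rw [hQF, hQo]; ring
    have hPFz : ∑ x ∈ F, p x = 0 :=
      Finset.sum_eq_zero fun x hx =>
        h0 x ((Finset.sum_eq_zero_iff_of_nonneg fun x _ => hq x).mp hQFz x hx)
    rw [hPF] at hPFz
    linarith
  have hbin := pinsker_binary hP0 hP1 hQ0 hQ1 hzero hone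
  have hkl : klDiv p q = (∑ x ∈ E, klTerm (p x) (q x)) + ∑ x ∈ F, klTerm (p x) (q x) :=
    (hsplit (fun x => klTerm (p x) (q x))).symm
  rw [htv, hkl]
  linarith

section reindex

variable {A B C : Type*} [Fintype A] [Fintype B] [Fintype C]

lemma sum_marg (f : A × B × C → ℝ) :
    ∑ ac : A × C, ∑ b, f (ac.1, b, ac.2) = ∑ x, f x := by
  rw [Fintype.sum_prod_type]
  conv_rhs => rw [Fintype.sum_prod_type]
  refine Finset.sum_congr rfl fun a _ => ?_
  conv_rhs => rw [Fintype.sum_prod_type]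
  exact Finset.sum_comm

lemma tv_marg_le (p q : A × B × C → ℝ) :
    tvDist (fun ac : A × C => ∑ b, p (ac.1, b, ac.2))
      (fun ac : A × C => ∑ b, q (ac.1, b, ac.2)) ≤ tvDist p q := by
  unfold tvDist
  have h2 : (0:ℝ) ≤ 1 / 2 := by norm_num
  refine mul_le_mul_of_nonneg_left ?_ h2
  calc ∑ ac : A × C, |(∑ b, p (ac.1, b, ac.2)) - ∑ b, q (ac.1, b, ac.2)|
      ≤ ∑ ac : A × C, ∑ b, |p (ac.1, b, ac.2) - q (ac.1, b, ac.2)| := by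
        refine Finset.sum_le_sum fun ac _ => ?_
        rw [← Finset.sum_sub_distrib]
        exact Finset.abs_sum_le_sum_abs _ _
    _ = ∑ x, |p x - q x| := sum_marg (fun x => |p x - q x|)

/-- The main deterministic bound. -/
lemma cmi_diff_bound (hA : Fintype.card A = 2) (p q : A × B × C → ℝ)
    (hp : ∀ x, 0 ≤ p x) (hpsum : ∑ x, p x = 1)
    (hq : ∀ x, 0 ≤ q x) (hqsum : ∑ x, q x = 1)
    (hqpos : ∀ x, 0 < p x → 0 < q x)
    (ε : ℝ) (hkl : klDiv p q ≤ ε) :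
    |cmi p - cmi q| ≤ 2 * Real.sqrt (ε / 2) * Real.log 2 +
      2 * (1 + Real.sqrt (ε / 2)) * binEntropy (Real.sqrt (ε / 2) / (1 + Real.sqrt (ε / 2))) := by
  haveI : Nonempty A := Fintype.card_pos_iff.mp (by rw [hA]; norm_num)
  have hA2 : ((Fintype.card A : ℝ)) = 2 := by rw [hA]; norm_num
  have h0 : ∀ x, q x = 0 → p x = 0 := by
    intro x hx
    by_contra h
    have hpx : 0 < p x := lt_of_le_of_ne (hp x) (Ne.symm h)
    have := hqpos x hpx
    rw [hx] at this
    exact lt_irrefl 0 this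
  have hpin := pinsker p q hp hpsum hq hqsum h0
  set s := Real.sqrt (ε / 2) with hs
  set t := tvDist p q with htdef
  have ht0 : 0 ≤ t := tvDist_nonneg p q
  have hts : t ≤ s := by
    have h1 : t ^ 2 ≤ ε / 2 := by linarith
    calc t = Real.sqrt (t ^ 2) := (Real.sqrt_sq ht0).symm
      _ ≤ Real.sqrt (ε / 2) := Real.sqrt_le_sqrt h1
  rcases eq_or_lt_of_le (Real.sqrt_nonneg (ε / 2)) with hz | hspos
  · -- s = 0 : p = q
    have hsz : s = 0 := by rw [hs, ← hz]
    have htz : t = 0 := le_antisymm (by rw [hsz] at hts; exact hts) ht0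
    have hpq : p = q := by
      funext x
      have hsum0 : ∑ x, |p x - q x| = 0 := by
        have : (1/2 : ℝ) * ∑ x, |p x - q x| = 0 := htz
        linarith
      have := (Finset.sum_eq_zero_iff_of_nonneg fun x _ => abs_nonneg (p x - q x)).mp hsum0
        x (Finset.mem_univ x)
      have := abs_eq_zero.mp this
      linarith
    rw [hpq, sub_self, abs_zero, hsz]
    norm_num [binEntropy_zero]
  · -- s > 0
    set m1p : A × C → ℝ := fun ac => ∑ b, p (ac.1, b, ac.2) with hm1p
    set m1q : A × C → ℝ := fun ac => ∑ b, q (ac.1, b, ac.2) with hm1q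
    have hcmip : cmi p = condEntropy m1p - condEntropy p := rfl
    have hcmiq : cmi q = condEntropy m1q - condEntropy q := rfl
    have hm1p0 : ∀ ac, 0 ≤ m1p ac := fun ac => Finset.sum_nonneg fun b _ => hp _
    have hm1q0 : ∀ ac, 0 ≤ m1q ac := fun ac => Finset.sum_nonneg fun b _ => hq _
    have hm1psum : ∑ ac, m1p ac = 1 := by rw [hm1p]; rw [sum_marg p]; exact hpsum
    have hm1qsum : ∑ ac, m1q ac = 1 := by rw [hm1q]; rw [sum_marg q]; exact hqsum
    have htv1 : tvDist m1p m1q ≤ s := le_trans (tv_marg_le p q) hts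
    have htv1' : tvDist m1q m1p ≤ s := by rw [tvDist_comm]; exact htv1
    have htv2 : tvDist p q ≤ s := hts
    have htv2' : tvDist q p ≤ s := by rw [tvDist_comm]; exact htv2
    have b1 := af_bound m1p m1q hm1p0 hm1psum hm1q0 hm1qsum hspos htv1
    have b1' := af_bound m1q m1p hm1q0 hm1qsum hm1p0 hm1psum hspos htv1'
    have b2 := af_bound p q hp hpsum hq hqsum hspos htv2
    have b2' := af_bound q p hq hqsum hp hpsum hspos htv2'
    rw [hA2] at b1 b1' b2 b2'
    have habs1 : |condEntropy m1p - condEntropy m1q| ≤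
        s * Real.log 2 + (1 + s) * binEntropy (s / (1 + s)) :=
      abs_sub_le_iff.mpr ⟨b1, b1'⟩
    have habs2 : |condEntropy p - condEntropy q| ≤
        s * Real.log 2 + (1 + s) * binEntropy (s / (1 + s)) :=
      abs_sub_le_iff.mpr ⟨b2, b2'⟩
    have htri : |cmi p - cmi q| ≤
        |condEntropy m1p - condEntropy m1q| + |condEntropy p - condEntropy q| := by
      rw [hcmip, hcmiq]
      have : condEntropy m1p - condEntropy p - (condEntropy m1q - condEntropy q) =
          (condEntropy m1p - condEntropy m1q) - (condEntropy p - condEntropy q) := by ring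
      rw [this]
      exact abs_sub _ _
    calc |cmi p - cmi q| ≤ _ := htri
      _ ≤ (s * Real.log 2 + (1 + s) * binEntropy (s / (1 + s))) +
          (s * Real.log 2 + (1 + s) * binEntropy (s / (1 + s))) := add_le_add habs1 habs2
      _ = 2 * s * Real.log 2 + 2 * (1 + s) * binEntropy (s / (1 + s)) := by ring

end reindex


open Filter MeasureTheory

/-- **Total Error Bound in the ε-regime (Theorem 4.2).**  Let `A` be binary,
`p, q` pmfs on `A × B × C` with `D_KL(p‖q) ≤ ε` and `δ(p,q) ≤ 1/2`
(the ε-oracle assumption).  Let `I = I_p(A;B|C)` be the true CMI and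
`I_θ = I_q(A;B|C)` the model-induced CMI, and let `Î_N` be random variables
converging almost surely to `I_θ`.  Then, almost surely,
`limsup_N |I − Î_N| ≤ 2·√(ε/2)·log 2 + 2·(1+√(ε/2))·h_b(√(ε/2)/(1+√(ε/2)))`. -/
theorem total_error_bound_eps_regime
    {A B C : Type*} [Fintype A] [Fintype B] [Fintype C]
    (hA : Fintype.card A = 2)
    (p q : A × B × C → ℝ)
    (hp : ∀ x, 0 ≤ p x) (hpsum : ∑ x, p x = 1)
    (hq : ∀ x, 0 ≤ q x) (hqsum : ∑ x, q x = 1)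
    (hqpos : ∀ x, 0 < p x → 0 < q x)
    (ε : ℝ) (hkl : klDiv p q ≤ ε) (htv : tvDist p q ≤ 1 / 2)
    {Ω : Type*} [MeasurableSpace Ω] (μ : Measure Ω) [IsProbabilityMeasure μ]
    (Ihat : ℕ → Ω → ℝ)
    (hconv : ∀ᵐ ω ∂μ, Tendsto (fun N => Ihat N ω) atTop (nhds (cmi q))) :
    ∀ᵐ ω ∂μ,
      limsup (fun N => |cmi p - Ihat N ω|) atTop ≤
        2 * Real.sqrt (ε / 2) * Real.log 2 +
          2 * (1 + Real.sqrt (ε / 2)) *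
            binEntropy (Real.sqrt (ε / 2) / (1 + Real.sqrt (ε / 2))) := by
  have hbound := cmi_diff_bound hA p q hp hpsum hq hqsum hqpos ε hkl
  filter_upwards [hconv] with ω hω
  have htend : Tendsto (fun N => |cmi p - Ihat N ω|) atTop (nhds |cmi p - cmi q|) :=
    (tendsto_const_nhds.sub hω).abs
  rw [htend.limsup_eq]
  exact hbound
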